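/- For natural numbers N, M with 1 ≤ N ≤ M, the fraction of collision-free outcomes among all N-photon M-mode outcomes satisfies C(M,N) > (1 − N²/M)·C(M+N−1,N), where C(a,b) denotes the binomial coefficient and the inequality is between real numbers. -/
import Mathlib

open Finset

private lemma one_sub_sum_le_prod_aux (f : ℕ → ℝ) (h0 : ∀ i, 0 ≤ f i) (h1 : ∀ i, f i ≤ 1)
    (n : ℕ) : 1 - ∑ i ∈ range n, f i ≤ ∏ i ∈ range n, (1 - f i) := by
  induction n with
  | zero => simp
  | succ n ih =>
    rw [Finset.sum_range_succ, Finset.prod_range_succ]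
    have hs : 0 ≤ ∑ i ∈ range n, f i := Finset.sum_nonneg fun i _ => h0 i
    have h2 : (1 - ∑ i ∈ range n, f i) * (1 - f n) ≤ (∏ i ∈ range n, (1 - f i)) * (1 - f n) :=
      mul_le_mul_of_nonneg_right ih (by linarith [h1 n])
    nlinarith [mul_nonneg (h0 n) hs]

private lemma ascFactorial_cast_prod (M N : ℕ) :
    ((M.ascFactorial N : ℕ) : ℝ) = ∏ i ∈ range N, ((M : ℝ) + i) := by
  induction N with
  | zero => simp [Nat.ascFactorial]
  | succ n ih =>
    rw [Finset.prod_range_succ, ← ih, Nat.ascFactorial_succ]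
    push_cast
    ring

/-- The number of collision-free outcomes `C(M,N)` of Boson Sampling with `M` modes and
`N` photons exceeds `(1 - N²/M)` times the total number `C(M+N-1,N)` of `N`-photon
outcomes over `M` modes, whenever `1 ≤ N ≤ M`. -/
theorem collisionFree_fraction (N M : ℕ) (h1 : 1 ≤ N) (h2 : N ≤ M) :
    (1 - (N : ℝ) ^ 2 / (M : ℝ)) * ((M + N - 1).choose N : ℝ) < ((M.choose N : ℝ)) := by
  have hM1 : 1 ≤ M := le_trans h1 h2
  have hM : (0 : ℝ) < M := by exact_mod_cast hM1
  have hchoose_pos : (0 : ℝ) < (M.choose N : ℝ) := by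
    exact_mod_cast Nat.choose_pos h2
  rcases le_or_gt (M : ℝ) ((N : ℝ) ^ 2) with hcase | hcase
  · -- trivial case : 1 - N²/M ≤ 0
    have hfac : (1 - (N : ℝ) ^ 2 / (M : ℝ)) ≤ 0 := by
      rw [sub_nonpos]
      exact (le_div_iff₀ hM).mpr (by linarith)
    calc (1 - (N : ℝ) ^ 2 / (M : ℝ)) * ((M + N - 1).choose N : ℝ)
        ≤ 0 := mul_nonpos_of_nonpos_of_nonneg hfac (by positivity)
      _ < _ := hchoose_pos
  · -- main case : N² < M
    have hfacpos : (0 : ℝ) < (N.factorial : ℝ) := by exact_mod_cast N.factorial_pos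
    rw [← mul_lt_mul_iff_right₀ hfacpos]
    have hA : (N.factorial : ℝ) * ((M + N - 1).choose N : ℝ) = ∏ i ∈ range N, ((M : ℝ) + i) := by
      rw [← ascFactorial_cast_prod]
      exact_mod_cast congrArg (Nat.cast (R := ℝ))
        (Nat.ascFactorial_eq_factorial_mul_choose' M N).symm
    have hD : (N.factorial : ℝ) * (M.choose N : ℝ) = ∏ i ∈ range N, ((M : ℝ) - i) := by
      have := Nat.descFactorial_eq_factorial_mul_choose M N
      have hcast : ((M.descFactorial N : ℕ) : ℝ) = ∏ i ∈ range N, ((M : ℝ) - i) := by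
        rw [Nat.descFactorial_eq_prod_range, Nat.cast_prod]
        refine Finset.prod_congr rfl fun i hi => ?_
        have : i ≤ M := le_trans (le_of_lt (Finset.mem_range.mp hi)) h2
        push_cast [Nat.cast_sub this]
        ring
      rw [← hcast, this]
      push_cast
      ring
    rw [mul_left_comm, hA, hD]
    -- key bounds
    set f : ℕ → ℝ := fun i => 2 * (i : ℝ) / M with hf
    have hf0 : ∀ i, i ∈ range N → 0 ≤ f i := fun i _ => by positivity
    have hf0' : ∀ i, 0 ≤ (fun j => if j < N then f j else 0) i := fun i => by
      by_cases h : i < N <;> simp [h] <;> positivity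
    have hfle : ∀ i < N, f i ≤ 1 := by
      intro i hi
      have hiN : (i : ℝ) ≤ (N : ℝ) - 1 := by
        have : i + 1 ≤ N := hi
        have := (Nat.cast_le (α := ℝ)).mpr this
        push_cast at this; linarith
      have hNN : 2 * ((N : ℝ) - 1) ≤ (N : ℝ) ^ 2 := by nlinarith [(Nat.one_le_cast (α := ℝ)).mpr h1]
      rw [hf, div_le_one hM]
      nlinarith
    -- each factor bound
    have hstep : ∀ i ∈ range N, (1 - f i) * ((M : ℝ) + i) ≤ (M : ℝ) - i := by
      intro i hi
      have hi0 : (0 : ℝ) ≤ i := Nat.cast_nonneg i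
      have : (1 - f i) * ((M : ℝ) + i) = (M : ℝ) - i - 2 * i ^ 2 / M := by
        rw [hf]; field_simp; ring
      rw [this]
      have : 0 ≤ 2 * (i : ℝ) ^ 2 / M := by positivity
      linarith
    have hfnneg : ∀ i ∈ range N, 0 ≤ (1 - f i) * ((M : ℝ) + i) := by
      intro i hi
      have := hfle i (Finset.mem_range.mp hi)
      have hMi : (0 : ℝ) ≤ (M : ℝ) + i := by positivity
      have := hf0 i hi
      nlinarith
    have hprodle : ∏ i ∈ range N, ((1 - f i) * ((M : ℝ) + i)) ≤ ∏ i ∈ range N, ((M : ℝ) - i) :=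
      Finset.prod_le_prod hfnneg hstep
    rw [Finset.prod_mul_distrib] at hprodle
    -- product of (1 - f i) lower bound
    have hgle : ∀ i, (fun j => if j < N then f j else 0) i ≤ 1 := fun i => by
      by_cases h : i < N
      · simpa [h] using hfle i h
      · simp [h]
    have hsumb := one_sub_sum_le_prod_aux (fun j => if j < N then f j else 0) hf0' hgle N
    have hsimp1 : ∑ i ∈ range N, (if i < N then f i else 0) = ∑ i ∈ range N, f i :=
      Finset.sum_congr rfl fun i hi => by simp [Finset.mem_range.mp hi]
    have hsimp2 : ∏ i ∈ range N, (1 - if i < N then f i else 0) = ∏ i ∈ range N, (1 - f i) :=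
      Finset.prod_congr rfl fun i hi => by simp [Finset.mem_range.mp hi]
    rw [hsimp1, hsimp2] at hsumb
    -- evaluate the sum
    have hsumval : ∑ i ∈ range N, f i = (N : ℝ) * ((N : ℝ) - 1) / M := by
      have hgauss : ((∑ i ∈ range N, i) * 2 : ℕ) = N * (N - 1) := Finset.sum_range_id_mul_two N
      have hgaussR : (∑ i ∈ range N, (i : ℝ)) * 2 = (N : ℝ) * ((N : ℝ) - 1) := by
        have := congrArg (Nat.cast (R := ℝ)) hgauss
        push_cast [Nat.cast_sub h1] at this
        convert this using 2
      calc ∑ i ∈ range N, f i = ∑ i ∈ range N, (i : ℝ) * (2 / M) :=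
            Finset.sum_congr rfl fun i _ => by rw [hf]; ring
        _ = (∑ i ∈ range N, (i : ℝ)) * (2 / M) := (Finset.sum_mul _ _ _).symm
        _ = (N : ℝ) * ((N : ℝ) - 1) / M := by
            rw [show ∑ i ∈ range N, (i : ℝ) = (N : ℝ) * ((N : ℝ) - 1) / 2 by linarith]
            ring
    rw [hsumval] at hsumb
    have hApos : (0 : ℝ) < ∏ i ∈ range N, ((M : ℝ) + i) := by
      apply Finset.prod_pos; intro i _; positivity
    have hstrict : 1 - (N : ℝ) ^ 2 / M < 1 - (N : ℝ) * ((N : ℝ) - 1) / M := by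
      have hN1 : (1 : ℝ) ≤ N := Nat.one_le_cast.mpr h1
      have hlt : (N : ℝ) * ((N : ℝ) - 1) < (N : ℝ) ^ 2 := by nlinarith
      have : (N : ℝ) * ((N : ℝ) - 1) / M < (N : ℝ) ^ 2 / M := by
        apply div_lt_div_of_pos_right hlt hM
      linarith
    calc (1 - (N : ℝ) ^ 2 / M) * ∏ i ∈ range N, ((M : ℝ) + i)
        < (1 - (N : ℝ) * ((N : ℝ) - 1) / M) * ∏ i ∈ range N, ((M : ℝ) + i) := by
          exact mul_lt_mul_of_pos_right hstrict hApos
      _ ≤ (∏ i ∈ range N, (1 - f i)) * ∏ i ∈ range N, ((M : ℝ) + i) :=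
          mul_le_mul_of_nonneg_right hsumb (le_of_lt hApos)
      _ ≤ ∏ i ∈ range N, ((M : ℝ) - i) := hprodle
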